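/- Let θ > 1/2 and define g : ℝ → ℝ by g(t) = |t|^{2θ} t. There exist constants C₁ > 0 and C₂ > 0, depending only on θ, such that for all a, σ ∈ ℝ: |g(a + σ) − g(a) − (2θ + 1)|a|^{2θ} σ| ≤ (C₁ |a|^{2θ−1} + C₂ |σ|^{2θ−1}) σ². -/

import Mathlib

open Real Set Filter Topology

/-- Derivative of `t ↦ |t|^p * t` is `(p+1)|t|^p` (for `p > 0`). -/
private lemma abs_rpow_mul_hasDerivAt {p : ℝ} (hp : 0 < p) (x : ℝ) :
    HasDerivAt (fun t : ℝ => |t| ^ p * t) ((p + 1) * |x| ^ p) x := by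
  rcases lt_trichotomy x 0 with hx | rfl | hx
  · have h2 : HasDerivAt (fun t : ℝ => (-t) ^ (p + 1))
        ((p + 1) * (-x) ^ (p + 1 - 1) * (-1)) x :=
      (Real.hasDerivAt_rpow_const (p := p + 1)
        (Or.inl (neg_ne_zero.2 hx.ne))).comp x (hasDerivAt_neg x)
    have h3 : HasDerivAt (fun t : ℝ => -((-t) ^ (p + 1))) ((p + 1) * |x| ^ p) x := by
      have := h2.neg
      refine this.congr_deriv ?_
      rw [abs_of_neg hx, show p + 1 - 1 = p by ring]
      ring
    refine h3.congr_of_eventuallyEq ?_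
    filter_upwards [Iio_mem_nhds hx] with t ht
    have ht' : (-t : ℝ) ≠ 0 := neg_ne_zero.2 (ne_of_lt ht)
    rw [abs_of_neg ht, Real.rpow_add_one ht']
    ring
  · have hcont : Tendsto (fun t : ℝ => |t| ^ p) (𝓝[≠] (0 : ℝ)) (𝓝 0) := by
      have h1 : Continuous (fun t : ℝ => |t| ^ p) :=
        continuous_abs.rpow_const (fun x => Or.inr hp.le)
      have := h1.tendsto 0
      rw [show |(0:ℝ)| ^ p = 0 by simp [Real.zero_rpow hp.ne']] at this
      exact this.mono_left nhdsWithin_le_nhds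
    rw [hasDerivAt_iff_tendsto_slope]
    have h0 : (p + 1) * |(0:ℝ)| ^ p = 0 := by simp [Real.zero_rpow hp.ne']
    rw [h0]
    refine hcont.congr' ?_
    filter_upwards [self_mem_nhdsWithin] with t ht
    have ht' : (t : ℝ) ≠ 0 := ht
    rw [slope_def_field]
    field_simp
    simp
  · have h2 : HasDerivAt (fun t : ℝ => t ^ (p + 1)) ((p + 1) * x ^ (p + 1 - 1)) x :=
      Real.hasDerivAt_rpow_const (p := p + 1) (Or.inl hx.ne')
    have h3 : HasDerivAt (fun t : ℝ => t ^ (p + 1)) ((p + 1) * |x| ^ p) x := by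
      convert h2 using 1
      rw [abs_of_pos hx, show p + 1 - 1 = p by ring]
    refine h3.congr_of_eventuallyEq ?_
    filter_upwards [Ioi_mem_nhds hx] with t ht
    rw [abs_of_pos ht, Real.rpow_add_one (ne_of_gt ht)]

private lemma rpow_sub_rpow_le' {p : ℝ} (hp : 1 ≤ p) {u v : ℝ} (hv : 0 ≤ v) (huv : v ≤ u) :
    u ^ p - v ^ p ≤ p * u ^ (p - 1) * (u - v) := by
  have hp0 : (0:ℝ) < p := lt_of_lt_of_le one_pos hp
  have H := Convex.norm_image_sub_le_of_norm_hasDerivWithin_le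
    (f := fun t : ℝ => t ^ p) (f' := fun t : ℝ => p * t ^ (p - 1))
    (s := Icc v u) (C := p * u ^ (p - 1))
    (fun t _ => (Real.hasDerivAt_rpow_const (Or.inr hp)).hasDerivWithinAt)
    (fun t ht => by
      have ht0 : 0 ≤ t := hv.trans ht.1
      rw [Real.norm_eq_abs, abs_of_nonneg (by positivity)]
      exact mul_le_mul_of_nonneg_left
        (Real.rpow_le_rpow ht0 ht.2 (by linarith)) hp0.le)
    (convex_Icc v u) (left_mem_Icc.2 huv) (right_mem_Icc.2 huv)
  rw [Real.norm_eq_abs, Real.norm_eq_abs,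
    abs_of_nonneg (sub_nonneg.2 (Real.rpow_le_rpow hv huv hp0.le)),
    abs_of_nonneg (sub_nonneg.2 huv)] at H
  exact H

private lemma abs_rpow_sub_rpow_le {p : ℝ} (hp : 1 ≤ p) {u v : ℝ} (hu : 0 ≤ u) (hv : 0 ≤ v) :
    |u ^ p - v ^ p| ≤ p * (max u v) ^ (p - 1) * |u - v| := by
  have hp0 : (0:ℝ) < p := lt_of_lt_of_le one_pos hp
  rcases le_total v u with h | h
  · rw [abs_of_nonneg (sub_nonneg.2 (Real.rpow_le_rpow hv h hp0.le)),
      abs_of_nonneg (sub_nonneg.2 h), max_eq_left h]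
    exact rpow_sub_rpow_le' hp hv h
  · rw [abs_sub_comm, abs_sub_comm u v,
      abs_of_nonneg (sub_nonneg.2 (Real.rpow_le_rpow hu h hp0.le)),
      abs_of_nonneg (sub_nonneg.2 h), max_eq_right h]
    exact rpow_sub_rpow_le' hp hu h

private lemma add_rpow_le_two_rpow {q : ℝ} (hq : 0 ≤ q) {x y : ℝ} (hx : 0 ≤ x) (hy : 0 ≤ y) :
    (x + y) ^ q ≤ 2 ^ q * (x ^ q + y ^ q) := by
  have h1 : x + y ≤ 2 * max x y := by
    rcases le_total x y with h | h
    · rw [max_eq_right h]; linarith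
    · rw [max_eq_left h]; linarith
  have hm : 0 ≤ max x y := le_max_of_le_left hx
  calc (x + y) ^ q ≤ (2 * max x y) ^ q := Real.rpow_le_rpow (by positivity) h1 hq
    _ = 2 ^ q * (max x y) ^ q := Real.mul_rpow (by norm_num) hm
    _ ≤ 2 ^ q * (x ^ q + y ^ q) := by
        have h2 : (max x y) ^ q ≤ x ^ q + y ^ q := by
          rcases le_total x y with h | h
          · rw [max_eq_right h]
            have := Real.rpow_nonneg hx q
            linarith
          · rw [max_eq_left h]
            have := Real.rpow_nonneg hy q
            linarith
        have h3 : (0:ℝ) ≤ 2 ^ q := Real.rpow_nonneg (by norm_num) q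
        nlinarith

/-- Lemma 2.1 of the paper (case `θ > 1/2`): a second-order Taylor-type estimate for the
power nonlinearity `g(t) = |t|^(2θ) t`. -/
theorem taylor_estimate_power_nonlinearity (θ : ℝ) (hθ : 1/2 < θ) :
    ∃ C₁ > (0:ℝ), ∃ C₂ > (0:ℝ), ∀ a σ : ℝ,
      |(|a + σ| ^ (2*θ) * (a + σ) - |a| ^ (2*θ) * a - (2*θ + 1) * |a| ^ (2*θ) * σ)|
        ≤ (C₁ * |a| ^ (2*θ - 1) + C₂ * |σ| ^ (2*θ - 1)) * σ ^ 2 := by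
  set p : ℝ := 2 * θ with hpdef
  have hp1 : 1 < p := by simp only [hpdef]; linarith
  have hp0 : 0 < p := lt_trans one_pos hp1
  have hq0 : 0 ≤ p - 1 := by linarith
  set K : ℝ := (p + 1) * p * 2 ^ (p - 1) with hKdef
  have hK0 : 0 < K := by
    have : (0:ℝ) < 2 ^ (p - 1) := Real.rpow_pos_of_pos (by norm_num) _
    positivity
  refine ⟨K, hK0, K, hK0, fun a σ => ?_⟩
  set F : ℝ → ℝ := fun t => |a + t| ^ p * (a + t) - (p + 1) * |a| ^ p * t with hFdef
  have hF : ∀ t : ℝ, HasDerivAt F ((p + 1) * |a + t| ^ p - (p + 1) * |a| ^ p) t := by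
    intro t
    have h1 : HasDerivAt (fun t : ℝ => |a + t| ^ p * (a + t)) ((p + 1) * |a + t| ^ p) t := by
      have := (abs_rpow_mul_hasDerivAt hp0 (a + t)).comp t ((hasDerivAt_id t).const_add a)
      exact this.congr_deriv (mul_one _)
    have h2 : HasDerivAt (fun t : ℝ => (p + 1) * |a| ^ p * t) ((p + 1) * |a| ^ p) t := by
      simpa using (hasDerivAt_id t).const_mul ((p + 1) * |a| ^ p)
    exact h1.sub h2
  set C : ℝ := K * (|a| ^ (p - 1) + |σ| ^ (p - 1)) * |σ| with hCdef
  have hbound : ∀ t ∈ uIcc (0:ℝ) σ,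
      ‖(p + 1) * |a + t| ^ p - (p + 1) * |a| ^ p‖ ≤ C := by
    intro t ht
    have htσ : |t| ≤ |σ| := by
      rw [abs_le]
      rcases Set.mem_uIcc.1 ht with ⟨h1, h2⟩ | ⟨h1, h2⟩ <;>
        exact ⟨by linarith [neg_abs_le σ, le_abs_self σ], by linarith [neg_abs_le σ, le_abs_self σ]⟩
    have hM : max |a + t| |a| ≤ |a| + |σ| := by
      refine max_le ?_ (le_add_of_nonneg_right (abs_nonneg σ))
      calc |a + t| ≤ |a| + |t| := abs_add_le a t
        _ ≤ |a| + |σ| := by linarith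
    have h1 : |(|a + t| ^ p - |a| ^ p)| ≤
        p * (max |a + t| |a|) ^ (p - 1) * |(|a + t| - |a|)| :=
      abs_rpow_sub_rpow_le hp1.le (abs_nonneg _) (abs_nonneg _)
    have h2 : |(|a + t| - |a|)| ≤ |σ| :=
      le_trans (abs_abs_sub_abs_le_abs_sub _ _) (by simpa using htσ)
    have h3 : (max |a + t| |a|) ^ (p - 1) ≤ (|a| + |σ|) ^ (p - 1) :=
      Real.rpow_le_rpow (le_max_of_le_left (abs_nonneg _)) hM hq0
    have h4 : (|a| + |σ|) ^ (p - 1) ≤ 2 ^ (p - 1) * (|a| ^ (p - 1) + |σ| ^ (p - 1)) :=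
      add_rpow_le_two_rpow hq0 (abs_nonneg a) (abs_nonneg σ)
    have hMnn : (0:ℝ) ≤ (max |a + t| |a|) ^ (p - 1) := Real.rpow_nonneg (le_max_of_le_left (abs_nonneg _)) _
    have hstep : |(|a + t| ^ p - |a| ^ p)| ≤
        p * (2 ^ (p - 1) * (|a| ^ (p - 1) + |σ| ^ (p - 1))) * |σ| := by
      calc |(|a + t| ^ p - |a| ^ p)|
          ≤ p * (max |a + t| |a|) ^ (p - 1) * |(|a + t| - |a|)| := h1
        _ ≤ p * (2 ^ (p - 1) * (|a| ^ (p - 1) + |σ| ^ (p - 1))) * |σ| := by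
            apply mul_le_mul
            · exact mul_le_mul_of_nonneg_left (h3.trans h4) hp0.le
            · exact h2
            · exact abs_nonneg _
            · positivity
    rw [Real.norm_eq_abs, show (p + 1) * |a + t| ^ p - (p + 1) * |a| ^ p
        = (p + 1) * (|a + t| ^ p - |a| ^ p) by ring, abs_mul,
      abs_of_nonneg (by linarith : (0:ℝ) ≤ p + 1)]
    calc (p + 1) * |(|a + t| ^ p - |a| ^ p)|
        ≤ (p + 1) * (p * (2 ^ (p - 1) * (|a| ^ (p - 1) + |σ| ^ (p - 1))) * |σ|) :=
          mul_le_mul_of_nonneg_left hstep (by linarith)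
      _ = C := by rw [hCdef, hKdef]; ring
  have hMVT := Convex.norm_image_sub_le_of_norm_hasDerivWithin_le
    (f := F) (f' := fun t => (p + 1) * |a + t| ^ p - (p + 1) * |a| ^ p)
    (s := uIcc (0:ℝ) σ) (C := C)
    (fun t _ => (hF t).hasDerivWithinAt) hbound (convex_uIcc 0 σ)
    left_mem_uIcc right_mem_uIcc
  have hF0 : F 0 = |a| ^ p * a := by simp [hFdef]
  have hFσ : F σ - F 0 =
      |a + σ| ^ p * (a + σ) - |a| ^ p * a - (p + 1) * |a| ^ p * σ := by
    rw [hF0]; simp only [hFdef]; ring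
  rw [hFσ] at hMVT
  rw [Real.norm_eq_abs, Real.norm_eq_abs, sub_zero] at hMVT
  have hs : |σ| * |σ| = σ ^ 2 := by rw [← sq_abs σ]; ring
  refine le_trans hMVT ?_
  rw [hCdef, ← hs]
  exact le_of_eq (by ring)
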